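/- Let n ≥ 1 and 0 < r_U ≤ r_𝒱. Define T : ℝⁿ → ℝⁿ by T(x) = (r_U/r_𝒱)·x. Then T pushes the uniform measure P_{B(0, r_𝒱)} forward to the uniform measure P_{B(0, r_U)}; the coupling γ obtained as the pushforward of P_{B(0, r_𝒱)} under the map x ↦ (T(x), x) is an optimal coupling for the L²-Wasserstein distance between P_{B(0, r_U)} and P_{B(0, r_𝒱)}; and W₂²(P_{B(0, r_U)}, P_{B(0, r_𝒱)}) = ∫_{B(0, r_𝒱)} ‖x − T(x)‖² dP_{B(0, r_𝒱)}(x) = (n/(n+2)) · (r_𝒱 − r_U)². -/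

import Mathlib

open MeasureTheory Metric Set
open scoped ENNReal NNReal

noncomputable section

/-- The uniform probability measure on a set `S ⊆ ℝⁿ`: Lebesgue measure restricted to `S`
and normalized. -/
def unif {n : ℕ} (S : Set (EuclideanSpace ℝ (Fin n))) : Measure (EuclideanSpace ℝ (Fin n)) :=
  (volume S)⁻¹ • volume.restrict S

/-- The set of couplings of two measures `μ, ν` on `ℝⁿ`: measures on the product whose
marginals are `μ` and `ν`. -/
def couplings {n : ℕ} (μ ν : Measure (EuclideanSpace ℝ (Fin n))) :
    Set (Measure (EuclideanSpace ℝ (Fin n) × EuclideanSpace ℝ (Fin n))) :=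
  {γ | γ.map Prod.fst = μ ∧ γ.map Prod.snd = ν}

/-- The `L²`-Wasserstein distance between two measures on `ℝⁿ` (valued in `ℝ≥0∞`):
the infimum over all couplings `γ` of `(∫ ‖a − b‖² dγ(a, b))^{1/2}`. -/
def W2 {n : ℕ} (μ ν : Measure (EuclideanSpace ℝ (Fin n))) : ℝ≥0∞ :=
  ⨅ γ ∈ couplings μ ν, (∫⁻ w, edist w.1 w.2 ^ 2 ∂γ) ^ (1 / 2 : ℝ)

theorem aux_real (n : ℕ) (hn : 1 ≤ n) (R : ℝ) (hR : 0 < R) :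
    ∫ x in ball (0 : EuclideanSpace ℝ (Fin n)) R, ‖x‖^2 =
      (n/(n+2) : ℝ) * R^2 * (volume (ball (0:EuclideanSpace ℝ (Fin n)) R)).toReal := by
  haveI : Nonempty (Fin n) := ⟨⟨0, hn⟩⟩
  have hdim : Module.finrank ℝ (EuclideanSpace ℝ (Fin n)) = n := finrank_euclideanSpace_fin
  have key := MeasureTheory.integral_fun_norm_addHaar (volume : Measure (EuclideanSpace ℝ (Fin n)))
    ((Set.Iio R).indicator (fun y : ℝ => y^2))
  rw [hdim] at key
  have hl : (∫ x, (Set.Iio R).indicator (fun y : ℝ => y^2) ‖x‖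
      ∂(volume : Measure (EuclideanSpace ℝ (Fin n)))) =
      ∫ x in ball (0 : EuclideanSpace ℝ (Fin n)) R, ‖x‖^2 := by
    rw [← integral_indicator measurableSet_ball]
    congr 1
    ext x
    simp only [Set.indicator_apply, mem_Iio]
    by_cases h : ‖x‖ < R
    · rw [if_pos h, Set.indicator_of_mem (mem_ball_zero_iff.2 h)]
    · rw [if_neg h, Set.indicator_of_notMem (fun hx => h (mem_ball_zero_iff.1 hx))]
  have hr : (∫ y in Set.Ioi (0:ℝ), y ^ (n - 1) • (Set.Iio R).indicator (fun y : ℝ => y^2) y) =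
      R ^ (n+2) / (n+2) := by
    have h1 : ∀ y : ℝ, y ^ (n - 1) • (Set.Iio R).indicator (fun y : ℝ => y^2) y =
        (Set.Iio R).indicator (fun y : ℝ => y ^ (n - 1) * y^2) y := by
      intro y
      by_cases h : y ∈ Set.Iio R
      · rw [Set.indicator_of_mem h, Set.indicator_of_mem h, smul_eq_mul]
      · rw [Set.indicator_of_notMem h, Set.indicator_of_notMem h, smul_eq_mul, mul_zero]
    simp_rw [h1]
    rw [integral_indicator measurableSet_Iio, Measure.restrict_restrict measurableSet_Iio,
      Set.Iio_inter_Ioi, ← integral_Ioc_eq_integral_Ioo, ← intervalIntegral.integral_of_le hR.le]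
    have h2 : ∀ y : ℝ, y ∈ Set.uIcc (0:ℝ) R → y ^ (n-1) * y ^ 2 = y ^ (n+1) := by
      intro y _
      rw [← pow_add]
      congr 1
      omega
    rw [intervalIntegral.integral_congr h2, integral_pow]
    norm_num
    ring
  rw [hl, hr] at key
  rw [key]
  have hv : (volume (ball (0:EuclideanSpace ℝ (Fin n)) R)).toReal =
      R ^ n * (volume (ball (0:EuclideanSpace ℝ (Fin n)) 1)).toReal := by
    rw [Measure.addHaar_ball _ _ hR.le, hdim, ENNReal.toReal_mul,
      ENNReal.toReal_ofReal (by positivity)]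
  rw [hv, nsmul_eq_mul, smul_eq_mul]
  have hR2 : R ^ (n+2) = R^2 * R^n := by ring
  have hn2 : (0:ℝ) < (n:ℝ) + 2 := by positivity
  field_simp
  simp only [Measure.real]
  ring

theorem aux_moment (n : ℕ) (hn : 1 ≤ n) (R : ℝ) (hR : 0 < R) :
    ∫⁻ x, ENNReal.ofReal (‖x‖^2) ∂(unif (ball (0 : EuclideanSpace ℝ (Fin n)) R)) =
      ENNReal.ofReal ((n/(n+2) : ℝ) * R^2) := by
  have hc : Continuous (fun x : EuclideanSpace ℝ (Fin n) => ‖x‖^2) := by continuity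
  have hint : IntegrableOn (fun x : EuclideanSpace ℝ (Fin n) => ‖x‖^2) (ball 0 R) volume :=
    (hc.locallyIntegrable.integrableOn_isCompact (isCompact_closedBall _ _)).mono_set
      ball_subset_closedBall
  have hset : ∫⁻ x in ball (0 : EuclideanSpace ℝ (Fin n)) R, ENNReal.ofReal (‖x‖^2) ∂volume =
      ENNReal.ofReal ((n/(n+2) : ℝ) * R^2) * volume (ball (0:EuclideanSpace ℝ (Fin n)) R) := by
    rw [← ofReal_integral_eq_lintegral_ofReal hint (Filter.Eventually.of_forall fun x => by positivity),
      aux_real n hn R hR, ENNReal.ofReal_mul (by positivity),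
      ENNReal.ofReal_toReal measure_ball_lt_top.ne]
  rw [unif, lintegral_smul_measure, hset, smul_eq_mul, ← mul_assoc, mul_comm _ (ENNReal.ofReal _), mul_assoc,
    ENNReal.inv_mul_cancel (measure_ball_pos volume _ hR).ne' measure_ball_lt_top.ne, mul_one]


/-- **The dilation is an optimal transport map between concentric balls.**
Let `0 < r_U ≤ r_𝒱` and `T x = (r_U/r_𝒱)·x`. Then `T` pushes the uniform measure on
`B(0, r_𝒱)` forward to the uniform measure on `B(0, r_U)`; the coupling
`(T x, x)_* P_{B(0, r_𝒱)}` is an optimal coupling for `W₂`; and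
`W₂²(P_{B(0,r_U)}, P_{B(0,r_𝒱)}) = ∫ ‖x − T x‖² dP_{B(0,r_𝒱)}(x) = (n/(n+2))·(r_𝒱 − r_U)²`. -/
theorem dilation_optimal_transport_balls (n : ℕ) (hn : 1 ≤ n) (rU rV : ℝ)
    (hrU : 0 < rU) (hrUV : rU ≤ rV)
    (T : EuclideanSpace ℝ (Fin n) → EuclideanSpace ℝ (Fin n))
    (hT : T = fun x => (rU / rV) • x) :
    Measure.map T (unif (ball (0 : EuclideanSpace ℝ (Fin n)) rV)) =
      unif (ball (0 : EuclideanSpace ℝ (Fin n)) rU) ∧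
    (Measure.map (fun x => (T x, x)) (unif (ball (0 : EuclideanSpace ℝ (Fin n)) rV)) ∈
        couplings (unif (ball (0 : EuclideanSpace ℝ (Fin n)) rU))
          (unif (ball (0 : EuclideanSpace ℝ (Fin n)) rV)) ∧
      (∫⁻ w, edist w.1 w.2 ^ 2
          ∂(Measure.map (fun x => (T x, x))
            (unif (ball (0 : EuclideanSpace ℝ (Fin n)) rV)))) ^ (1 / 2 : ℝ) =
        W2 (unif (ball (0 : EuclideanSpace ℝ (Fin n)) rU))
          (unif (ball (0 : EuclideanSpace ℝ (Fin n)) rV))) ∧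
    (W2 (unif (ball (0 : EuclideanSpace ℝ (Fin n)) rU))
          (unif (ball (0 : EuclideanSpace ℝ (Fin n)) rV))) ^ 2 =
        ∫⁻ x, edist x (T x) ^ 2 ∂(unif (ball (0 : EuclideanSpace ℝ (Fin n)) rV)) ∧
    (W2 (unif (ball (0 : EuclideanSpace ℝ (Fin n)) rU))
          (unif (ball (0 : EuclideanSpace ℝ (Fin n)) rV))) ^ 2 =
        ENNReal.ofReal ((n / (n + 2) : ℝ) * (rV - rU) ^ 2) := by
  haveI : Nonempty (Fin n) := ⟨⟨0, hn⟩⟩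
  have hrV : 0 < rV := lt_of_lt_of_le hrU hrUV
  set c : ℝ := rU / rV with hc
  have hc0 : 0 < c := div_pos hrU hrV
  have hc1 : c ≤ 1 := (div_le_one hrV).2 hrUV
  have hcrV : c * rV = rU := div_mul_cancel₀ _ hrV.ne'
  have hdim : Module.finrank ℝ (EuclideanSpace ℝ (Fin n)) = n := finrank_euclideanSpace_fin
  set κ : ℝ := (n/(n+2) : ℝ) with hκ
  have hκ0 : 0 ≤ κ := by positivity
  set μ := unif (ball (0 : EuclideanSpace ℝ (Fin n)) rU) with hμ
  set ν := unif (ball (0 : EuclideanSpace ℝ (Fin n)) rV) with hν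
  have hmeasT : Measurable T := by
    rw [hT]; exact (continuous_const_smul c).measurable
  -- Part A : pushforward
  have partA : Measure.map T ν = μ := by
    rw [hT, hμ, hν]
    have hmap : Measure.map (fun x : EuclideanSpace ℝ (Fin n) => c • x) volume
        = ENNReal.ofReal (|(c:ℝ) ^ n|⁻¹) • volume := by
      have := Measure.map_addHaar_smul (volume : Measure (EuclideanSpace ℝ (Fin n))) hc0.ne'
      rwa [hdim, abs_inv] at this
    have hpre : (fun x : EuclideanSpace ℝ (Fin n) => c • x) ⁻¹' (ball 0 rU) = ball 0 rV := by
      ext x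
      simp only [mem_preimage, mem_ball_zero_iff, norm_smul, Real.norm_eq_abs, abs_of_pos hc0, hc]
      rw [abs_div, abs_of_pos hrU, abs_of_pos hrV, div_mul_eq_mul_div, div_lt_iff₀ hrV]
      constructor <;> intro h <;> nlinarith
    have hmeas : Measurable (fun x : EuclideanSpace ℝ (Fin n) => c • x) :=
      (continuous_const_smul c).measurable
    have hBU : volume (ball (0:EuclideanSpace ℝ (Fin n)) rU)
        = ENNReal.ofReal (c ^ n) * volume (ball (0:EuclideanSpace ℝ (Fin n)) rV) := by
      rw [Measure.addHaar_ball _ _ hrU.le, Measure.addHaar_ball _ _ hrV.le, hdim,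
        ← mul_assoc, ← ENNReal.ofReal_mul (by positivity)]
      congr 2
      rw [← mul_pow, hc, div_mul_cancel₀ _ hrV.ne']
    have hres : Measure.map (fun x : EuclideanSpace ℝ (Fin n) => c • x)
        (volume.restrict (ball 0 rV))
        = ENNReal.ofReal (|(c:ℝ) ^ n|⁻¹) • volume.restrict (ball 0 rU) := by
      rw [← hpre, ← Measure.restrict_map hmeas measurableSet_ball, hmap, Measure.restrict_smul]
    rw [unif, unif, Measure.map_smul, hres, smul_smul]
    congr 1
    rw [hBU, abs_of_pos (by positivity), ENNReal.ofReal_inv_of_pos (by positivity),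
      ENNReal.mul_inv (Or.inl (ENNReal.ofReal_pos.2 (by positivity)).ne')
        (Or.inl ENNReal.ofReal_ne_top)]
    rw [mul_comm]
  -- coupling γ₀
  set γ₀ := Measure.map (fun x => (T x, x)) ν with hγ₀
  have hpair : Measurable (fun x : EuclideanSpace ℝ (Fin n) => (T x, x)) :=
    hmeasT.prodMk measurable_id
  have hmem : γ₀ ∈ couplings μ ν := by
    constructor
    · rw [hγ₀, Measure.map_map measurable_fst hpair]
      exact partA
    · rw [hγ₀, Measure.map_map measurable_snd hpair]
      exact Measure.map_id
  -- cost of γ₀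
  have hMV : ∫⁻ x, ENNReal.ofReal (‖x‖^2) ∂ν = ENNReal.ofReal (κ * rV^2) :=
    aux_moment n hn rV hrV
  have hMU : ∫⁻ x, ENNReal.ofReal (‖x‖^2) ∂μ = ENNReal.ofReal (κ * rU^2) :=
    aux_moment n hn rU hrU
  have hnorm2 : Measurable (fun x : EuclideanSpace ℝ (Fin n) => ENNReal.ofReal (‖x‖^2)) :=
    (measurable_norm.pow_const 2).ennreal_ofReal
  set L₀ : ℝ≥0∞ := ENNReal.ofReal (κ * (rV - rU)^2) with hL₀
  have hedist : ∀ x : EuclideanSpace ℝ (Fin n),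
      edist (T x) x ^ 2 = ENNReal.ofReal ((1-c)^2) * ENNReal.ofReal (‖x‖^2) := by
    intro x
    rw [edist_dist, dist_eq_norm, hT]
    have : (c • x - x : EuclideanSpace ℝ (Fin n)) = (c - 1) • x := by
      rw [sub_smul, one_smul]
    rw [this, norm_smul, Real.norm_eq_abs, ← ENNReal.ofReal_pow (by positivity), mul_pow,
      sq_abs, ← ENNReal.ofReal_mul (by positivity)]
    congr 2
    ring
  have hcost₀ : ∫⁻ x, edist (T x) x ^ 2 ∂ν = L₀ := by
    simp_rw [hedist]
    rw [lintegral_const_mul _ hnorm2, hMV, ← ENNReal.ofReal_mul (by positivity), hL₀]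
    congr 1
    have h2 : (1 - c) * rV = rV - rU := by
      rw [sub_mul, one_mul, hcrV]
    rw [show (1 - c)^2 * (κ * rV^2) = κ * ((1-c)*rV)^2 from by ring, h2]
  -- lower bound for any coupling
  have lower : ∀ γ ∈ couplings μ ν, L₀ ≤ ∫⁻ w, edist w.1 w.2 ^ 2 ∂γ := by
    rintro γ ⟨hγ1, hγ2⟩
    have hd : 0 ≤ 1/c - 1 := by
      rw [sub_nonneg, le_div_iff₀ hc0, one_mul]; exact hc1
    have point : ∀ w : EuclideanSpace ℝ (Fin n) × EuclideanSpace ℝ (Fin n),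
        ENNReal.ofReal ((1-c) * ‖w.2‖^2) ≤
          edist w.1 w.2 ^ 2 + ENNReal.ofReal ((1/c - 1) * ‖w.1‖^2) := by
      rintro ⟨a, b⟩
      have he : edist a b ^ 2 = ENNReal.ofReal (‖a - b‖^2) := by
        rw [edist_dist, dist_eq_norm, ← ENNReal.ofReal_pow (norm_nonneg _)]
      rw [he, ← ENNReal.ofReal_add (by positivity) (by positivity)]
      apply ENNReal.ofReal_le_ofReal
      have hab : (‖b‖ - ‖a‖)^2 ≤ ‖a - b‖^2 := by
        have h1 : |‖a‖ - ‖b‖| ≤ ‖a - b‖ := abs_norm_sub_norm_le a b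
        nlinarith [abs_nonneg (‖a‖ - ‖b‖), sq_abs (‖a‖ - ‖b‖), norm_nonneg (a - b)]
      have hcd : c * (1/c) = 1 := by field_simp
      nlinarith [sq_nonneg (‖a‖ - c*‖b‖), hc0, hcd, mul_pos hc0 hc0]
    have mcost : Measurable (fun w : EuclideanSpace ℝ (Fin n) × EuclideanSpace ℝ (Fin n) =>
        edist w.1 w.2 ^ 2) := (measurable_edist.pow_const 2)
    have h1 : ∫⁻ w, ENNReal.ofReal ((1-c) * ‖w.2‖^2) ∂γ ≤
        (∫⁻ w, edist w.1 w.2 ^ 2 ∂γ) +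
          ∫⁻ w, ENNReal.ofReal ((1/c - 1) * ‖w.1‖^2) ∂γ := by
      rw [← lintegral_add_left mcost]
      exact lintegral_mono point
    have hlhs : ∫⁻ w, ENNReal.ofReal ((1-c) * ‖w.2‖^2) ∂γ
        = ENNReal.ofReal ((1-c) * (κ * rV^2)) := by
      have : ∫⁻ w : EuclideanSpace ℝ (Fin n) × EuclideanSpace ℝ (Fin n),
          ENNReal.ofReal ((1-c) * ‖w.2‖^2) ∂γ
          = ∫⁻ b, ENNReal.ofReal ((1-c) * ‖b‖^2) ∂ν := by
        rw [← hγ2, lintegral_map (((measurable_norm.pow_const 2).const_mul _).ennreal_ofReal)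
          measurable_snd]
      rw [this]
      simp_rw [ENNReal.ofReal_mul (by linarith : (0:ℝ) ≤ 1 - c)]
      rw [lintegral_const_mul _ hnorm2, hMV, ← ENNReal.ofReal_mul (by linarith)]
    have hrhs : ∫⁻ w, ENNReal.ofReal ((1/c - 1) * ‖w.1‖^2) ∂γ
        = ENNReal.ofReal ((1/c - 1) * (κ * rU^2)) := by
      have : ∫⁻ w : EuclideanSpace ℝ (Fin n) × EuclideanSpace ℝ (Fin n),
          ENNReal.ofReal ((1/c - 1) * ‖w.1‖^2) ∂γ
          = ∫⁻ a, ENNReal.ofReal ((1/c - 1) * ‖a‖^2) ∂μ := by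
        rw [← hγ1, lintegral_map (((measurable_norm.pow_const 2).const_mul _).ennreal_ofReal)
          measurable_fst]
      rw [this]
      simp_rw [ENNReal.ofReal_mul hd]
      rw [lintegral_const_mul _ hnorm2, hMU, ← ENNReal.ofReal_mul hd]
    rw [hlhs, hrhs] at h1
    have hsplit : ENNReal.ofReal ((1-c) * (κ * rV^2))
        = L₀ + ENNReal.ofReal ((1/c - 1) * (κ * rU^2)) := by
      rw [hL₀, ← ENNReal.ofReal_add (by positivity) (by positivity)]
      congr 1
      have h2 : (1 - c) * rV = rV - rU := by rw [sub_mul, one_mul, hcrV]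
      have h3 : (1/c - 1) * rU = rV - rU := by
        rw [sub_mul, one_mul, hc, one_div_div, div_mul_cancel₀ _ hrU.ne']
      calc (1-c) * (κ * rV^2) = κ * (((1-c) * rV) * rV) := by ring
        _ = κ * ((rV - rU) * rV) := by rw [h2]
        _ = κ * (rV - rU)^2 + κ * (((1/c - 1) * rU) * rU) := by rw [h3]; ring
        _ = κ * (rV - rU)^2 + (1/c - 1) * (κ * rU^2) := by ring
    rw [hsplit] at h1
    exact (ENNReal.add_le_add_iff_right ENNReal.ofReal_ne_top).1 h1
  -- cost of γ₀ as measure on the product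
  have hγ₀cost : ∫⁻ w, edist w.1 w.2 ^ 2 ∂γ₀ = L₀ := by
    rw [hγ₀, lintegral_map (measurable_edist.pow_const 2) hpair]
    exact hcost₀
  -- W2 value
  have hW2 : W2 μ ν = L₀ ^ (1/2 : ℝ) := by
    apply le_antisymm
    · have := iInf₂_le (f := fun (γ : Measure (EuclideanSpace ℝ (Fin n) × EuclideanSpace ℝ (Fin n)))
        (_ : γ ∈ couplings μ ν) => (∫⁻ w, edist w.1 w.2 ^ 2 ∂γ) ^ (1/2 : ℝ)) γ₀ hmem
      rw [hγ₀cost] at this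
      exact this
    · exact le_iInf₂ fun γ hγ => ENNReal.rpow_le_rpow (lower γ hγ) (by norm_num)
  have hW2sq : (W2 μ ν) ^ 2 = L₀ := by
    rw [hW2, ← ENNReal.rpow_natCast (L₀ ^ (1/2 : ℝ)) 2, ← ENNReal.rpow_mul]
    norm_num
  refine ⟨partA, ⟨hmem, ?_⟩, ?_, ?_⟩
  · rw [hγ₀cost, hW2]
  · rw [hW2sq, ← hcost₀]
    congr 1
    ext x
    rw [edist_comm]
  · rw [hW2sq, hL₀]


end
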